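/- The vector space U_\alpha with basis {a_k, \bar a_k | k \in Z} is a module over the three-point Witt algebra W (with basis d_n, d^1_n and brackets [d_m,d_n]=(n-m)(d_{m+n+1}+4d_{m+n}), [d^1_m,d^1_n]=(n-m)d_{m+n-1}, [d_m,d^1_n]=(n-m-1)d^1_{m+n+1}+(4n-4m-2)d^1_{m+n}) under the action: d_n a_i = (\alpha+i)(a_{i+n+1} + 4 a_{i+n}); d_n \bar a_i = (\alpha+i+1)\bar a_{n+i+1} + (4\alpha+4i+2)\bar a_{n+i}; d^1_n a_i = (\alpha+i)\bar a_{n+i-1}; d^1_n \bar a_i = (\alpha+i+1) a_{n+i+1} + 2(2\alpha+2i+1) a_{n+i}. -/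
import Mathlib


/-- The vector space `U_α` with basis `{a_k, ā_k | k ∈ ℤ}`; the basis is indexed by
`Bool × ℤ` with `(false, k) ↔ a_k` and `(true, k) ↔ ā_k`. -/
abbrev UMod : Type := (Bool × ℤ) →₀ ℂ

/-- The basis vector `a_i`. -/
noncomputable def aU (i : ℤ) : UMod := Finsupp.single (false, i) 1

/-- The basis vector `ā_i`. -/
noncomputable def abarU (i : ℤ) : UMod := Finsupp.single (true, i) 1

/-- The operator by which `d_n` acts on `U_α`. -/
noncomputable def dOp (α : ℂ) (n : ℤ) : Module.End ℂ UMod :=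
  Finsupp.lift UMod ℂ (Bool × ℤ) fun p =>
    match p with
    | (false, i) => (α + (i : ℂ)) • (aU (i + n + 1) + (4 : ℂ) • aU (i + n))
    | (true, i) => (α + (i : ℂ) + 1) • abarU (n + i + 1) +
        (4 * α + 4 * (i : ℂ) + 2) • abarU (n + i)

/-- The operator by which `d¹_n` acts on `U_α`. -/
noncomputable def d1Op (α : ℂ) (n : ℤ) : Module.End ℂ UMod :=
  Finsupp.lift UMod ℂ (Bool × ℤ) fun p =>
    match p with
    | (false, i) => (α + (i : ℂ)) • abarU (n + i - 1)
    | (true, i) => (α + (i : ℂ) + 1) • aU (n + i + 1) +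
        (2 * (2 * α + 2 * (i : ℂ) + 1)) • aU (n + i)

lemma dOp_aU (α : ℂ) (n i : ℤ) :
    dOp α n (aU i) = (α + (i : ℂ)) • (aU (i + n + 1) + (4 : ℂ) • aU (i + n)) := by
  simp [dOp, aU, Finsupp.lift_apply, Finsupp.sum_single_index]

lemma dOp_abarU (α : ℂ) (n i : ℤ) :
    dOp α n (abarU i) = (α + (i : ℂ) + 1) • abarU (n + i + 1) +
        (4 * α + 4 * (i : ℂ) + 2) • abarU (n + i) := by
  simp [dOp, abarU, Finsupp.lift_apply, Finsupp.sum_single_index]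

lemma d1Op_aU (α : ℂ) (n i : ℤ) :
    d1Op α n (aU i) = (α + (i : ℂ)) • abarU (n + i - 1) := by
  simp [d1Op, aU, Finsupp.lift_apply, Finsupp.sum_single_index]

lemma d1Op_abarU (α : ℂ) (n i : ℤ) :
    d1Op α n (abarU i) = (α + (i : ℂ) + 1) • aU (n + i + 1) +
        (2 * (2 * α + 2 * (i : ℂ) + 1)) • aU (n + i) := by
  simp [d1Op, abarU, Finsupp.lift_apply, Finsupp.sum_single_index]

lemma single_false (i : ℤ) : (Finsupp.single (false, i) 1 : UMod) = aU i := rfl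
lemma single_true (i : ℤ) : (Finsupp.single (true, i) 1 : UMod) = abarU i := rfl

/-- `U_α` is a module over the three-point Witt algebra, i.e. the
operators `dOp`, `d1Op` satisfy the three-point Witt commutation relations. -/
theorem U_alpha_is_witt_module (α : ℂ) (m n : ℤ) :
    ⁅dOp α m, dOp α n⁆ = ((n : ℂ) - m) • (dOp α (m + n + 1) + (4 : ℂ) • dOp α (m + n)) ∧
    ⁅d1Op α m, d1Op α n⁆ = ((n : ℂ) - m) • dOp α (m + n - 1) ∧
    ⁅dOp α m, d1Op α n⁆ = ((n : ℂ) - m - 1) • d1Op α (m + n + 1) +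
      (4 * (n : ℂ) - 4 * m - 2) • d1Op α (m + n) := by
  refine ⟨?_, ?_, ?_⟩ <;>
  · refine Finsupp.lhom_ext fun p c => ?_
    obtain ⟨b, i⟩ := p
    have hc : (Finsupp.single (b, i) c : UMod) = c • Finsupp.single (b, i) 1 := by
      rw [Finsupp.smul_single, smul_eq_mul, mul_one]
    rw [hc]
    simp only [map_smul]
    congr 1
    cases b <;>
    · simp only [LieRing.of_associative_ring_bracket, Module.End.mul_apply,
        LinearMap.sub_apply, LinearMap.add_apply, LinearMap.smul_apply, single_false, single_true,
        dOp_aU, dOp_abarU, d1Op_aU, d1Op_abarU, map_add, map_smul, map_sub, smul_add, smul_sub,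
        smul_smul]
      ring_nf
      push_cast
      module
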